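/- Let 𝒳 be a finite nonempty set with |𝒳| = m, let ε ∈ (0,1], α ∈ (0,1], β ∈ (0,1) with L := ln(m/β) ≥ 1, and let n be an integer with n ≥ 12L/(αε). Set α* = αε/(24L). Let t ∈ [0, n], let r̂_min, r̂_max : 𝒳 → ℝ satisfy r̂_min(x) ≤ r̂_max(x) for all x, define u(x) = −d(t, [r̂_min(x), r̂_max(x)]), and assume there exists x* ∈ 𝒳 with d(t, [r̂_min(x*), r̂_max(x*)]) ≤ 2α*n. If x̂ is sampled from the Gibbs distribution on 𝒳 with score x ↦ ε·u(x)/(2·(4α*n + 2)), then with probability at least 1 − β, d(t, [r̂_min(x̂), r̂_max(x̂)]) ≤ αn. -/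
import Mathlib

open Finset

/-- The Gibbs distribution on a finite set with score `f` assigns to `r` probability
`exp (f r) / ∑ r', exp (f r')`. -/
noncomputable def gibbs {R : Type*} [Fintype R] (f : R → ℝ) (r : R) : ℝ :=
  Real.exp (f r) / ∑ r', Real.exp (f r')

lemma gibbs_tail_bound {R : Type*} [Fintype R] (f : R → ℝ) (S : Finset R)
    (c M : ℝ) (x0 : R) (hS : ∀ x ∈ S, f x ≤ c) (hx0 : M ≤ f x0) :
    ∑ x ∈ S, gibbs f x ≤ (Fintype.card R : ℝ) * Real.exp (c - M) := by
  have hZge : Real.exp M ≤ ∑ r', Real.exp (f r') :=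
    le_trans (Real.exp_le_exp.mpr hx0)
      (Finset.single_le_sum (fun x _ => (Real.exp_pos _).le) (Finset.mem_univ x0))
  have hMpos : (0:ℝ) < Real.exp M := Real.exp_pos _
  have hZpos : (0:ℝ) < ∑ r', Real.exp (f r') := lt_of_lt_of_le hMpos hZge
  have hnum : ∑ x ∈ S, Real.exp (f x) ≤ (Fintype.card R : ℝ) * Real.exp c := by
    calc ∑ x ∈ S, Real.exp (f x) ≤ ∑ _x ∈ S, Real.exp c :=
          Finset.sum_le_sum (fun x hx => Real.exp_le_exp.mpr (hS x hx))
      _ = (S.card : ℝ) * Real.exp c := by rw [Finset.sum_const, nsmul_eq_mul]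
      _ ≤ (Fintype.card R : ℝ) * Real.exp c := by
          apply mul_le_mul_of_nonneg_right _ (Real.exp_pos _).le
          exact_mod_cast Finset.card_le_univ S
  calc ∑ x ∈ S, gibbs f x = (∑ x ∈ S, Real.exp (f x)) / (∑ r', Real.exp (f r')) := by
        rw [Finset.sum_div]; rfl
    _ ≤ ((Fintype.card R : ℝ) * Real.exp c) / Real.exp M := by
        apply div_le_div₀ (by positivity) hnum hMpos hZge
    _ = (Fintype.card R : ℝ) * Real.exp (c - M) := by
        rw [Real.exp_sub]; ring

theorem stmt13 {𝒳 : Type*} [Fintype 𝒳] [Nonempty 𝒳]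
    (m : ℕ) (hm : Fintype.card 𝒳 = m)
    (ε α β : ℝ) (hε0 : 0 < ε) (hε1 : ε ≤ 1) (hα0 : 0 < α) (hα1 : α ≤ 1)
    (hβ0 : 0 < β) (hβ1 : β < 1)
    (L : ℝ) (hL : L = Real.log (m / β)) (hL1 : 1 ≤ L)
    (n : ℕ) (hn : 12 * L / (α * ε) ≤ (n : ℝ))
    (αstar : ℝ) (hαstar : αstar = α * ε / (24 * L))
    (t : ℝ) (ht0 : 0 ≤ t) (htn : t ≤ n)
    (rhmin rhmax : 𝒳 → ℝ) (hle : ∀ x, rhmin x ≤ rhmax x)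
    (hstar : ∃ xstar : 𝒳,
      Metric.infDist t (Set.Icc (rhmin xstar) (rhmax xstar)) ≤ 2 * αstar * n) :
    ∑ x ∈ Finset.univ.filter (fun x : 𝒳 =>
        ¬ Metric.infDist t (Set.Icc (rhmin x) (rhmax x)) ≤ α * n),
      gibbs (fun x : 𝒳 =>
        ε * (-(Metric.infDist t (Set.Icc (rhmin x) (rhmax x)))) /
          (2 * (4 * αstar * n + 2))) x
      ≤ β := by
  classical
  obtain ⟨xs, hxs⟩ := hstar
  have hLpos : 0 < L := lt_of_lt_of_le one_pos hL1
  have hαε : 0 < α * ε := mul_pos hα0 hε0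
  have hαεn : 12 * L ≤ α * ε * n := by
    have h := (div_le_iff₀ hαε).mp hn
    nlinarith [h]
  have hnpos : (0:ℝ) < n := by nlinarith
  have hA : αstar * n * (24 * L) = α * ε * n := by
    rw [hαstar]; field_simp
  have hLA : L * (αstar * n) = α * ε * n / 24 := by linear_combination hA / 24
  have hA2 : 1/2 ≤ αstar * n := by nlinarith
  have hdenpos : (0:ℝ) < 2 * (4 * αstar * n + 2) := by nlinarith
  -- key arithmetic inequality
  have key : L * (2 * (4 * αstar * n + 2)) ≤ ε * (α * n - 2 * (αstar * n)) := by
    have hεL : ε ≤ L := le_trans hε1 hL1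
    have f2 : ε * (α * ε * n) ≤ L * (α * ε * n) :=
      mul_le_mul_of_nonneg_right hεL (by nlinarith)
    have f3 : L * (12 * L) ≤ L * (α * ε * n) :=
      mul_le_mul_of_nonneg_left hαεn hLpos.le
    have f4 : ε * (L * (αstar * n)) = ε * (α * ε * n) / 24 := by
      linear_combination ε * hLA
    have f5 : L * (L * (αstar * n)) = L * (α * ε * n) / 24 := by
      linear_combination L * hLA
    have hmul : L * (L * (2 * (4 * αstar * n + 2))) ≤ L * (ε * (α * n - 2 * (αstar * n))) := by
      nlinarith [f2, f3, f4, f5]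
    exact le_of_mul_le_mul_left hmul hLpos
  have hm1 : 1 ≤ m := by rw [← hm]; exact Fintype.card_pos
  have hmpos : (0:ℝ) < m := by exact_mod_cast hm1
  -- apply the tail bound
  set c : ℝ := ε * (-(α * n)) / (2 * (4 * αstar * n + 2)) with hc
  set M : ℝ := ε * (-(2 * αstar * n)) / (2 * (4 * αstar * n + 2)) with hM
  have hbound := gibbs_tail_bound
    (fun x : 𝒳 => ε * (-(Metric.infDist t (Set.Icc (rhmin x) (rhmax x)))) /
      (2 * (4 * αstar * n + 2)))
    (Finset.univ.filter (fun x : 𝒳 =>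
        ¬ Metric.infDist t (Set.Icc (rhmin x) (rhmax x)) ≤ α * n))
    c M xs
    (by
      intro x hx
      have hxS : α * n ≤ Metric.infDist t (Set.Icc (rhmin x) (rhmax x)) :=
        le_of_not_ge (Finset.mem_filter.mp hx).2
      rw [hc]
      exact div_le_div_of_nonneg_right
        (mul_le_mul_of_nonneg_left (neg_le_neg hxS) hε0.le) hdenpos.le)
    (by
      rw [hM]
      exact div_le_div_of_nonneg_right
        (mul_le_mul_of_nonneg_left (neg_le_neg hxs) hε0.le) hdenpos.le)
  have hcM : c - M ≤ -L := by
    rw [hc, hM, div_sub_div_same, div_le_iff₀ hdenpos]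
    linarith [key]
  have hexp : Real.exp (c - M) ≤ Real.exp (-L) := Real.exp_le_exp.mpr hcM
  have hexpL : Real.exp (-L) = β / m := by
    rw [hL, Real.exp_neg, Real.exp_log (by positivity)]
    field_simp
  calc ∑ x ∈ Finset.univ.filter (fun x : 𝒳 =>
        ¬ Metric.infDist t (Set.Icc (rhmin x) (rhmax x)) ≤ α * n),
      gibbs (fun x : 𝒳 =>
        ε * (-(Metric.infDist t (Set.Icc (rhmin x) (rhmax x)))) /
          (2 * (4 * αstar * n + 2))) x
      ≤ (Fintype.card 𝒳 : ℝ) * Real.exp (c - M) := hbound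
    _ ≤ (m : ℝ) * Real.exp (-L) := by
        rw [hm]; exact mul_le_mul_of_nonneg_left hexp hmpos.le
    _ = β := by rw [hexpL]; field_simp
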